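/- arXiv:1709.07731 — 3 statements merged into one kernel-verified Lean document; each statement's English description precedes it below -/
import Mathlib

section
/- Let x, z ∈ R^N with ‖x‖_0 = s₁, ‖z‖_0 = s₂, s₂ ≥ s₁. Let S₂ = supp(z, s₂) be the support of the s₂ largest-magnitude entries of z, and let S∇ be the set of indices of the s₂ − s₁ smallest-magnitude elements of z among its support. Then ‖x_{S∇}‖ ≤ √2 ‖(x − z)_{S₂}‖ ≤ √2 ‖x − z‖. -/
/-- Euclidean norm of a finitely-indexed real vector. -/
noncomputable def vecEnorm {ι : Type*} [Fintype ι] (v : ι → ℝ) : ℝ :=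
  Real.sqrt (∑ i, v i ^ 2)

/-- Restriction of a vector to an index set (zero outside the set). -/
def restrict {ι : Type*} [Fintype ι] [DecidableEq ι] (v : ι → ℝ) (S : Finset ι) : ι → ℝ :=
  fun i => if i ∈ S then v i else 0

lemma sum_restrict_sq {N : ℕ} (v : Fin N → ℝ) (S : Finset (Fin N)) :
    ∑ i, (restrict v S i) ^ 2 = ∑ i ∈ S, v i ^ 2 := by
  unfold restrict
  simp [apply_ite (fun t : ℝ => t ^ 2), Finset.sum_ite_mem]

/-- Let `x, z` with `‖x‖₀ = s₁`, `‖z‖₀ = s₂`, `s₂ ≥ s₁`.  Let `S₂` be the support of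
the `s₂` largest-magnitude entries of `z` (here the full support of `z`), and `S∇ ⊆ S₂`
the set of the `s₂ − s₁` smallest-magnitude elements of `z` in `S₂`.  Then
`‖x_{S∇}‖ ≤ √2 ‖(x − z)_{S₂}‖ ≤ √2 ‖x − z‖`. -/
theorem pruned_indices_bound {N : ℕ} (s₁ s₂ : ℕ) (hs : s₁ ≤ s₂)
    (x z : Fin N → ℝ)
    (S₂ Snabla : Finset (Fin N))
    (hxsupp : ∃ T : Finset (Fin N), T.card = s₁ ∧ ∀ i, x i ≠ 0 ↔ i ∈ T)
    (hS₂ : S₂.card = s₂ ∧ ∀ i, z i ≠ 0 ↔ i ∈ S₂)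
    (hsub : Snabla ⊆ S₂)
    (hcard : Snabla.card = s₂ - s₁)
    (hsmall : ∀ i ∈ Snabla, ∀ j ∈ S₂ \ Snabla, |z i| ≤ |z j|) :
    vecEnorm (restrict x Snabla) ≤ Real.sqrt 2 * vecEnorm (restrict (x - z) S₂) ∧
    Real.sqrt 2 * vecEnorm (restrict (x - z) S₂) ≤ Real.sqrt 2 * vecEnorm (x - z) := by
  classical
  obtain ⟨T, hTcard, hT⟩ := hxsupp
  obtain ⟨hS₂card, hS₂supp⟩ := hS₂
  set g : Fin N → ℝ := fun j => (x j - z j) ^ 2 with hg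
  have hgnn : ∀ j, 0 ≤ g j := fun j => sq_nonneg _
  constructor
  · -- main inequality
    set A : Finset (Fin N) := Snabla ∩ T with hA
    set B : Finset (Fin N) := (S₂ \ Snabla) \ T with hB
    -- card of S₂ \ Snabla
    have hsd : (S₂ \ Snabla).card = s₁ := by
      rw [Finset.card_sdiff_of_subset hsub, hcard, hS₂card, Nat.sub_sub_self hs]
    -- |A| ≤ |B|
    have hcardAB : A.card ≤ B.card := by
      have h1 : A.card + ((S₂ \ Snabla) ∩ T).card ≤ s₁ := by
        have hdisj : Disjoint A ((S₂ \ Snabla) ∩ T) := by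
          apply Finset.disjoint_left.mpr
          intro a ha ha'
          exact (Finset.mem_sdiff.mp (Finset.mem_inter.mp ha').1).2
            (Finset.mem_inter.mp ha).1
        have : A ∪ ((S₂ \ Snabla) ∩ T) ⊆ T := by
          intro a ha
          rcases Finset.mem_union.mp ha with h | h
          · exact (Finset.mem_inter.mp h).2
          · exact (Finset.mem_inter.mp h).2
        calc A.card + ((S₂ \ Snabla) ∩ T).card
            = (A ∪ ((S₂ \ Snabla) ∩ T)).card := (Finset.card_union_of_disjoint hdisj).symm
          _ ≤ T.card := Finset.card_le_card this
          _ = s₁ := hTcard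
      have h2 := Finset.card_sdiff_add_card_inter (S₂ \ Snabla) T
      have hBe : B.card = ((S₂ \ Snabla) \ T).card := rfl
      omega
    -- get an injection A ↪ B
    have hcard' : Fintype.card A ≤ Fintype.card B := by
      simpa [Fintype.card_coe] using hcardAB
    obtain ⟨f⟩ := Function.Embedding.nonempty_of_card_le hcard'
    -- key pointwise estimate for i ∈ A
    have hkey : ∀ i : A, (x i.1) ^ 2 ≤ 2 * g i.1 + 2 * g (f i).1 := by
      intro i
      have hiA : i.1 ∈ A := i.2
      have hiS : i.1 ∈ Snabla := (Finset.mem_inter.mp hiA).1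
      have hfB : (f i).1 ∈ B := (f i).2
      have hfSd : (f i).1 ∈ S₂ \ Snabla := (Finset.mem_sdiff.mp hfB).1
      have hfT : (f i).1 ∉ T := (Finset.mem_sdiff.mp hfB).2
      have hxf : x (f i).1 = 0 := by
        by_contra h; exact hfT ((hT _).mp h)
      have habs : |z i.1| ≤ |z (f i).1| := hsmall _ hiS _ hfSd
      have hz2 : (z i.1) ^ 2 ≤ (z (f i).1) ^ 2 := by
        rw [← sq_abs (z i.1), ← sq_abs (z (f i).1)]
        exact pow_le_pow_left₀ (abs_nonneg _) habs 2
      have hgf : g (f i).1 = (z (f i).1) ^ 2 := by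
        simp [hg, hxf]
      rw [hgf]
      have hgi : g i.1 = (x i.1 - z i.1) ^ 2 := rfl
      rw [hgi]
      nlinarith [sq_nonneg (x i.1 - 2 * z i.1)]
    -- sum over Snabla of x² equals sum over A
    have hsumA : ∑ i ∈ Snabla, (x i) ^ 2 = ∑ i ∈ A, (x i) ^ 2 := by
      refine (Finset.sum_subset (Finset.inter_subset_left) ?_).symm
      intro i hi hiA
      have : x i = 0 := by
        by_contra h
        exact hiA (Finset.mem_inter.mpr ⟨hi, (hT i).mp h⟩)
      simp [this]
    -- sum of g over image of f
    have himg : ∑ i ∈ A.attach, g (f i).1 ≤ ∑ j ∈ B, g j := by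
      have hinj : Set.InjOn (fun i : A => (f i).1) A.attach := by
        intro a _ b _ hab
        exact f.injective (Subtype.ext hab)
      rw [← Finset.sum_image hinj]
      apply Finset.sum_le_sum_of_subset_of_nonneg
      · intro j hj
        obtain ⟨i, _, rfl⟩ := Finset.mem_image.mp hj
        exact (f i).2
      · intro j _ _; exact hgnn j
    have hAsub : A ⊆ S₂ := fun i hi => hsub (Finset.mem_inter.mp hi).1
    have hBsub : B ⊆ S₂ := fun j hj =>
      (Finset.mem_sdiff.mp (Finset.mem_sdiff.mp hj).1).1
    have hABdisj : Disjoint A B := by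
      apply Finset.disjoint_left.mpr
      intro a ha hb
      exact (Finset.mem_sdiff.mp (Finset.mem_sdiff.mp hb).1).2 (Finset.mem_inter.mp ha).1
    have hsum2 : ∑ i ∈ A, g i + ∑ j ∈ B, g j ≤ ∑ i ∈ S₂, g i := by
      rw [← Finset.sum_union hABdisj]
      apply Finset.sum_le_sum_of_subset_of_nonneg
      · exact Finset.union_subset hAsub hBsub
      · intro j _ _; exact hgnn j
    -- the main sum inequality
    have hmain : ∑ i ∈ Snabla, (x i) ^ 2 ≤ 2 * ∑ i ∈ S₂, g i := by
      rw [hsumA]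
      calc ∑ i ∈ A, (x i) ^ 2 = ∑ i ∈ A.attach, (x i.1) ^ 2 :=
            (Finset.sum_attach A (fun i => x i ^ 2)).symm
        _ ≤ ∑ i ∈ A.attach, (2 * g i.1 + 2 * g (f i).1) := Finset.sum_le_sum
            (fun i _ => hkey i)
        _ = 2 * ∑ i ∈ A, g i + 2 * ∑ i ∈ A.attach, g (f i).1 := by
            rw [Finset.sum_add_distrib, ← Finset.mul_sum, ← Finset.mul_sum,
              Finset.sum_attach A (fun i => g i)]
        _ ≤ 2 * ∑ i ∈ A, g i + 2 * ∑ j ∈ B, g j := by linarith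
        _ = 2 * (∑ i ∈ A, g i + ∑ j ∈ B, g j) := by ring
        _ ≤ 2 * ∑ i ∈ S₂, g i := by linarith
    -- convert to enorms
    unfold vecEnorm
    rw [sum_restrict_sq, sum_restrict_sq, ← Real.sqrt_mul (by norm_num : (0:ℝ) ≤ 2)]
    apply Real.sqrt_le_sqrt
    simpa [hg] using hmain
  · apply mul_le_mul_of_nonneg_left _ (Real.sqrt_nonneg 2)
    unfold vecEnorm
    apply Real.sqrt_le_sqrt
    rw [sum_restrict_sq]
    apply Finset.sum_le_sum_of_subset_of_nonneg (Finset.subset_univ S₂)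
    intro j _ _; exact sq_nonneg _
end

section
/- Suppose for all l, y_l = A x + e_l, all blocks x̃_l are s-sparse with support equal to supp(x) of size s, and each x̃_l satisfies ‖y_l − A x̃_l‖ ≤ ‖e_l‖. If A has RIC δ_{2s} < 1, H is doubly stochastic, x̌_l = Σ_r h_{lr} x̃_r, and x̂_l is the best s-sparse approximation of x̌_l, then with stacked vectors x̲ = (x,…,x), x̲̂ = (x̂_1,…,x̂_L), e̲ = (e_1,…,e_L): ‖x̲ − x̲̂‖ ≤ (4/√(1 − δ_{2s}))·‖e̲‖. -/
/-- Euclidean norm of a finitely-indexed real vector. -/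
noncomputable def eucNorm {ι : Type*} [Fintype ι] (v : ι → ℝ) : ℝ :=
  Real.sqrt (∑ i, v i ^ 2)

/-- `v` is `k`-sparse: at most `k` nonzero entries. -/
def sparse {ι : Type*} [Fintype ι] (k : ℕ) (v : ι → ℝ) : Prop :=
  ∃ T : Finset ι, T.card ≤ k ∧ ∀ i ∉ T, v i = 0

/-- `δ` is a restricted isometry constant of order `k` for `A`. -/
def RIPwith {M N : ℕ} (A : Matrix (Fin M) (Fin N) ℝ) (k : ℕ) (δ : ℝ) : Prop :=
  ∀ v : Fin N → ℝ, sparse k v →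
    (1 - δ) * eucNorm v ^ 2 ≤ eucNorm (A.mulVec v) ^ 2 ∧
    eucNorm (A.mulVec v) ^ 2 ≤ (1 + δ) * eucNorm v ^ 2

lemma enorm_nonneg' {ι : Type*} [Fintype ι] (v : ι → ℝ) : 0 ≤ eucNorm v :=
  Real.sqrt_nonneg _

lemma enorm_sq' {ι : Type*} [Fintype ι] (v : ι → ℝ) : eucNorm v ^ 2 = ∑ i, v i ^ 2 :=
  Real.sq_sqrt (Finset.sum_nonneg fun i _ => sq_nonneg _)

lemma enorm_eq_norm' {ι : Type*} [Fintype ι] (v : ι → ℝ) :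
    eucNorm v = ‖(WithLp.equiv 2 (ι → ℝ)).symm v‖ := by
  rw [EuclideanSpace.norm_eq]
  simp [eucNorm, Real.norm_eq_abs, sq_abs]

lemma enorm_triangle' {ι : Type*} [Fintype ι] (u v : ι → ℝ) :
    eucNorm (u + v) ≤ eucNorm u + eucNorm v := by
  simpa [enorm_eq_norm'] using
    norm_add_le ((WithLp.equiv 2 (ι → ℝ)).symm u) ((WithLp.equiv 2 (ι → ℝ)).symm v)

lemma enorm_sub_comm' {ι : Type*} [Fintype ι] (u v : ι → ℝ) :
    eucNorm (u - v) = eucNorm (v - u) := by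
  unfold eucNorm
  congr 1
  exact Finset.sum_congr rfl fun i _ => by simp only [Pi.sub_apply]; ring

lemma enorm_neg' {ι : Type*} [Fintype ι] (v : ι → ℝ) : eucNorm (-v) = eucNorm v := by
  unfold eucNorm
  congr 1
  exact Finset.sum_congr rfl fun i _ => by simp only [Pi.neg_apply]; ring

/-- Doubly-stochastic fusion bound for DHTP: if `y l = A x + e l`, each `x̃ l` is
`s`-sparse with support equal to `supp x` (of size `s`) and satisfies
`‖y l − A x̃ l‖ ≤ ‖e l‖`, `A` has RIC `δ_{2s} < 1`, `H` is doubly stochastic,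
`x̌ l = ∑ r, h l r • x̃ r` and `x̂ l` is a best `s`-sparse approximation of `x̌ l`,
then for the stacked vectors `‖x̲ − x̲̂‖ ≤ (4/√(1 − δ_{2s}))·‖e̲‖`. -/
theorem stacked_error_bound {L M N : ℕ} (s : ℕ)
    (A : Matrix (Fin M) (Fin N) ℝ)
    (x : Fin N → ℝ) (e : Fin L → (Fin M → ℝ)) (y : Fin L → (Fin M → ℝ))
    (hy : ∀ l, y l = A.mulVec x + e l)
    (S : Finset (Fin N)) (hScard : S.card = s) (hSsupp : ∀ i, x i ≠ 0 ↔ i ∈ S)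
    (δ : ℝ) (hδ : RIPwith A (2 * s) δ) (hδlt : δ < 1)
    (H : Matrix (Fin L) (Fin L) ℝ)
    (hpos : ∀ l r, 0 ≤ H l r)
    (hrow : ∀ l, ∑ r, H l r = 1)
    (hcol : ∀ r, ∑ l, H l r = 1)
    (xtilde : Fin L → (Fin N → ℝ))
    (hxtsupp : ∀ l i, xtilde l i ≠ 0 ↔ i ∈ S)
    (hres : ∀ l, eucNorm (y l - A.mulVec (xtilde l)) ≤ eucNorm (e l))
    (xcheck : Fin L → (Fin N → ℝ))
    (hxcheck : ∀ l, xcheck l = ∑ r, H l r • xtilde r)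
    (xhat : Fin L → (Fin N → ℝ))
    (hxhat_sparse : ∀ l, sparse s (xhat l))
    (hxhat_best : ∀ l, ∀ z : Fin N → ℝ, sparse s z →
      eucNorm (xcheck l - xhat l) ≤ eucNorm (xcheck l - z)) :
    eucNorm (fun p : Fin L × Fin N => x p.2 - xhat p.1 p.2) ≤
      4 / Real.sqrt (1 - δ) * eucNorm (fun p : Fin L × Fin M => e p.1 p.2) := by
  have hδpos : (0:ℝ) < 1 - δ := by linarith
  -- x is s-sparse
  have hxsp : sparse s x := ⟨S, hScard.le, fun i hi => by
    by_contra h; exact hi ((hSsupp i).1 h)⟩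
  -- Step C : per-agent bound for xtilde
  have hC : ∀ r, (1 - δ) * eucNorm (x - xtilde r) ^ 2 ≤ 4 * eucNorm (e r) ^ 2 := by
    intro r
    have hsp : sparse (2 * s) (x - xtilde r) := by
      refine ⟨S, by omega, fun i hi => ?_⟩
      have hx : x i = 0 := by by_contra h; exact hi ((hSsupp i).1 h)
      have hxt : xtilde r i = 0 := by by_contra h; exact hi ((hxtsupp r i).1 h)
      simp [hx, hxt]
    have h1 := (hδ _ hsp).1
    have heq : A.mulVec (x - xtilde r) = (y r - A.mulVec (xtilde r)) + (-(e r)) := by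
      rw [hy r, Matrix.mulVec_sub]
      ext i; simp; ring
    have hAle : eucNorm (A.mulVec (x - xtilde r)) ≤ 2 * eucNorm (e r) := by
      rw [heq]
      calc eucNorm ((y r - A.mulVec (xtilde r)) + (-(e r)))
          ≤ eucNorm (y r - A.mulVec (xtilde r)) + eucNorm (-(e r)) := enorm_triangle' _ _
        _ ≤ eucNorm (e r) + eucNorm (e r) := by
            rw [enorm_neg']; exact add_le_add_left (hres r) _
        _ = 2 * eucNorm (e r) := by ring
    have hsq : eucNorm (A.mulVec (x - xtilde r)) ^ 2 ≤ (2 * eucNorm (e r)) ^ 2 :=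
      pow_le_pow_left₀ (enorm_nonneg' _) hAle 2
    nlinarith [enorm_nonneg' (e r)]
  -- Step B : contraction of the doubly stochastic mixing
  have hB : ∑ l, eucNorm (x - xcheck l) ^ 2 ≤ ∑ r, eucNorm (x - xtilde r) ^ 2 := by
    have key : ∀ l i, (x i - xcheck l i) ^ 2 ≤ ∑ r, H l r * (x i - xtilde r i) ^ 2 := by
      intro l i
      have hx : x i - xcheck l i = ∑ r, H l r * (x i - xtilde r i) := by
        rw [hxcheck l]
        simp only [Finset.sum_apply, Pi.smul_apply, smul_eq_mul, mul_sub]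
        rw [Finset.sum_sub_distrib, ← Finset.sum_mul, hrow l, one_mul]
      rw [hx]
      have := Finset.sum_sq_le_sum_mul_sum_of_sq_eq_mul Finset.univ
        (r := fun r => H l r * (x i - xtilde r i))
        (f := fun r => H l r) (g := fun r => H l r * (x i - xtilde r i) ^ 2)
        (fun r _ => hpos l r)
        (fun r _ => mul_nonneg (hpos l r) (sq_nonneg _))
        (fun r _ => by ring)
      simpa [hrow l] using this
    calc ∑ l, eucNorm (x - xcheck l) ^ 2
        = ∑ l, ∑ i, (x i - xcheck l i) ^ 2 := by
          simp [enorm_sq', Pi.sub_apply]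
      _ ≤ ∑ l, ∑ i, ∑ r, H l r * (x i - xtilde r i) ^ 2 := by
          refine Finset.sum_le_sum fun l _ => Finset.sum_le_sum fun i _ => key l i
      _ = ∑ r, ∑ i, (x i - xtilde r i) ^ 2 := by
          have hswap : ∀ l, ∑ i, ∑ r, H l r * (x i - xtilde r i) ^ 2
              = ∑ r, H l r * ∑ i, (x i - xtilde r i) ^ 2 := fun l => by
            rw [Finset.sum_comm]
            exact Finset.sum_congr rfl fun r _ => by rw [Finset.mul_sum]
          simp_rw [hswap]
          rw [Finset.sum_comm]
          exact Finset.sum_congr rfl fun r _ => by rw [← Finset.sum_mul, hcol r, one_mul]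
      _ = ∑ r, eucNorm (x - xtilde r) ^ 2 := by
          simp [enorm_sq', Pi.sub_apply]
  -- Step A : per-agent bound relating xhat to xcheck
  have hA2 : ∀ l, eucNorm (x - xhat l) ≤ 2 * eucNorm (x - xcheck l) := by
    intro l
    have hbest := hxhat_best l x hxsp
    calc eucNorm (x - xhat l)
        = eucNorm ((x - xcheck l) + (xcheck l - xhat l)) := by
          congr 1; ext i; simp only [Pi.add_apply, Pi.sub_apply]; ring
      _ ≤ eucNorm (x - xcheck l) + eucNorm (xcheck l - xhat l) := enorm_triangle' _ _
      _ ≤ eucNorm (x - xcheck l) + eucNorm (xcheck l - x) := add_le_add_right hbest _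
      _ = 2 * eucNorm (x - xcheck l) := by rw [enorm_sub_comm' (xcheck l) x]; ring
  -- Assemble
  set Eb := eucNorm (fun p : Fin L × Fin M => e p.1 p.2) with hEb
  have hEbnn : 0 ≤ Eb := enorm_nonneg' _
  have hEbsq : Eb ^ 2 = ∑ r, eucNorm (e r) ^ 2 := by
    rw [enorm_sq', Fintype.sum_prod_type]
    simp [enorm_sq']
  set Lb := eucNorm (fun p : Fin L × Fin N => x p.2 - xhat p.1 p.2) with hLb
  have hLbsq : Lb ^ 2 = ∑ l, eucNorm (x - xhat l) ^ 2 := by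
    rw [enorm_sq', Fintype.sum_prod_type]
    simp [enorm_sq', Pi.sub_apply]
  have hmain : Lb ^ 2 ≤ 16 / (1 - δ) * Eb ^ 2 := by
    have h1 : ∑ l, eucNorm (x - xhat l) ^ 2 ≤ ∑ l, 4 * eucNorm (x - xcheck l) ^ 2 := by
      refine Finset.sum_le_sum fun l _ => ?_
      have := pow_le_pow_left₀ (enorm_nonneg' _) (hA2 l) 2
      nlinarith [enorm_nonneg' (x - xcheck l)]
    have h2 : ∑ r, eucNorm (x - xtilde r) ^ 2 ≤ ∑ r, 4 / (1 - δ) * eucNorm (e r) ^ 2 := by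
      refine Finset.sum_le_sum fun r _ => ?_
      have := hC r
      rw [div_mul_eq_mul_div, le_div_iff₀ hδpos]
      nlinarith
    rw [hLbsq, hEbsq]
    calc ∑ l, eucNorm (x - xhat l) ^ 2
        ≤ ∑ l, 4 * eucNorm (x - xcheck l) ^ 2 := h1
      _ = 4 * ∑ l, eucNorm (x - xcheck l) ^ 2 := by rw [Finset.mul_sum]
      _ ≤ 4 * ∑ r, eucNorm (x - xtilde r) ^ 2 := by linarith [hB]
      _ ≤ 4 * ∑ r, 4 / (1 - δ) * eucNorm (e r) ^ 2 := by linarith [h2]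
      _ = 16 / (1 - δ) * ∑ r, eucNorm (e r) ^ 2 := by
          rw [Finset.mul_sum, Finset.mul_sum]
          refine Finset.sum_congr rfl fun r _ => ?_
          field_simp; ring
  have hRHSnn : 0 ≤ 4 / Real.sqrt (1 - δ) * Eb :=
    mul_nonneg (div_nonneg (by norm_num) (Real.sqrt_nonneg _)) hEbnn
  have hRHSsq : (4 / Real.sqrt (1 - δ) * Eb) ^ 2 = 16 / (1 - δ) * Eb ^ 2 := by
    rw [mul_pow, div_pow, Real.sq_sqrt hδpos.le]
    norm_num
  have hLbnn : 0 ≤ Lb := enorm_nonneg' _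
  calc Lb = Real.sqrt (Lb ^ 2) := by rw [Real.sqrt_sq hLbnn]
    _ ≤ Real.sqrt ((4 / Real.sqrt (1 - δ) * Eb) ^ 2) := by
        apply Real.sqrt_le_sqrt; rw [hRHSsq]; exact hmain
    _ = 4 / Real.sqrt (1 - δ) * Eb := Real.sqrt_sq hRHSnn
end

section
/- Let A have RIC δ_{3s}, let x be s-sparse, x̂ be s-sparse, y = Ax + e. If T̃ = supp(x̂ + Aᵀ(y − A x̂), s) then ‖(x − x̃)_{T̃^c}‖ ≤ √2·δ_{3s}·‖x − x̂‖ + √(2(1+δ_{2s}))·‖e‖, where x̃ is any vector supported on T̃ (so (x̃)_{T̃^c} = 0 and (x − x̃)_{T̃^c} = x_{T̃^c}). -/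
open Finset Matrix
section basiclemmas
variable {ι : Type*} [Fintype ι] [DecidableEq ι]
set_option linter.unusedSectionVars false

lemma eucNorm_nonneg' (v : ι → ℝ) : 0 ≤ eucNorm v := Real.sqrt_nonneg _

lemma dot_self_eq (v : ι → ℝ) : v ⬝ᵥ v = eucNorm v ^ 2 := by
  unfold eucNorm; rw [Real.sq_sqrt (by positivity)]
  unfold dotProduct
  apply Finset.sum_congr rfl; intro i _; ring

lemma eucNorm_eq_zero' {v : ι → ℝ} (h : eucNorm v = 0) : v = 0 := by
  have h2 : ∑ i, v i ^ 2 = 0 := Real.sqrt_eq_zero (by positivity) |>.mp h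
  funext i
  have := (Finset.sum_eq_zero_iff_of_nonneg (fun i _ => sq_nonneg (v i))).mp h2 i (Finset.mem_univ i)
  exact pow_eq_zero_iff (by norm_num) |>.mp this

lemma eucNorm_eq_norm (v : ι → ℝ) :
    eucNorm v = ‖(WithLp.equiv 2 (ι → ℝ)).symm v‖ := by
  rw [EuclideanSpace.norm_eq]
  have : ∀ i, ‖(WithLp.equiv 2 (ι → ℝ)).symm v i‖ ^ 2 = v i ^ 2 := by
    intro i; rw [WithLp.equiv_symm_apply, PiLp.toLp_apply, Real.norm_eq_abs, sq_abs]
  unfold eucNorm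
  rw [Finset.sum_congr rfl (fun i _ => this i)]

lemma eucNorm_triangle (a b : ι → ℝ) : eucNorm (a + b) ≤ eucNorm a + eucNorm b := by
  rw [eucNorm_eq_norm, eucNorm_eq_norm, eucNorm_eq_norm]
  simpa using norm_add_le ((WithLp.equiv 2 (ι → ℝ)).symm a) ((WithLp.equiv 2 (ι → ℝ)).symm b)

lemma eucNorm_neg' (a : ι → ℝ) : eucNorm (-a) = eucNorm a := by
  unfold eucNorm; congr 1; apply Finset.sum_congr rfl; intro i _; simp [neg_pow]

lemma dot_le_eucNorm (a b : ι → ℝ) : a ⬝ᵥ b ≤ eucNorm a * eucNorm b := by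
  rw [eucNorm_eq_norm, eucNorm_eq_norm]
  have := real_inner_le_norm ((WithLp.equiv 2 (ι → ℝ)).symm a) ((WithLp.equiv 2 (ι → ℝ)).symm b)
  simpa [PiLp.inner_apply, dotProduct, WithLp.equiv_symm_apply, PiLp.toLp_apply, mul_comm] using this

lemma sum_sq_restrict (v : ι → ℝ) (S : Finset ι) :
    ∑ i, _root_.restrict v S i ^ 2 = ∑ i ∈ S, v i ^ 2 := by
  rw [← Finset.sum_filter_add_sum_filter_not Finset.univ (· ∈ S) (_root_.restrict v S · ^ 2)]
  have h1 : ∀ i ∈ Finset.univ.filter (· ∈ S), _root_.restrict v S i ^ 2 = v i ^ 2 := by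
    intro i hi; simp only [Finset.mem_filter] at hi; simp [_root_.restrict, hi.2]
  have h2 : ∀ i ∈ Finset.univ.filter (¬ · ∈ S), _root_.restrict v S i ^ 2 = 0 := by
    intro i hi; simp only [Finset.mem_filter] at hi; simp [_root_.restrict, hi.2]
  rw [Finset.sum_congr rfl h1, Finset.sum_congr rfl h2, Finset.sum_const_zero, add_zero]
  congr 1; ext i; simp

lemma eucNorm_restrict_eq (v : ι → ℝ) (S : Finset ι) :
    eucNorm (_root_.restrict v S) = Real.sqrt (∑ i ∈ S, v i ^ 2) := by
  unfold eucNorm; rw [sum_sq_restrict]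

lemma eucNorm_restrict_sq (v : ι → ℝ) (S : Finset ι) :
    eucNorm (_root_.restrict v S) ^ 2 = ∑ i ∈ S, v i ^ 2 := by
  unfold eucNorm; rw [Real.sq_sqrt (by positivity), sum_sq_restrict]

lemma restrict_dot (v w : ι → ℝ) (S : Finset ι) :
    _root_.restrict v S ⬝ᵥ w = ∑ i ∈ S, v i * w i := by
  unfold dotProduct _root_.restrict
  rw [← Finset.sum_subset (Finset.subset_univ S)
    (fun i _ hi => by simp [if_neg hi])]
  apply Finset.sum_congr rfl; intro i hi; rw [if_pos hi]

lemma restrict_add (v w : ι → ℝ) (S : Finset ι) :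
    _root_.restrict (v + w) S = _root_.restrict v S + _root_.restrict w S := by
  funext i; by_cases h : i ∈ S <;> simp [_root_.restrict, h]

lemma restrict_neg (v : ι → ℝ) (S : Finset ι) :
    _root_.restrict (-v) S = -(_root_.restrict v S) := by
  funext i; by_cases h : i ∈ S <;> simp [_root_.restrict, h]

lemma restrict_dot_self (g : ι → ℝ) (S : Finset ι) :
    _root_.restrict g S ⬝ᵥ g = eucNorm (_root_.restrict g S) ^ 2 := by
  rw [restrict_dot, eucNorm_restrict_sq]
  apply Finset.sum_congr rfl; intro i _; ring

lemma sum_le_sum_of_card_le {A B : Finset ι} (f : ι → ℝ) (hf : ∀ i, 0 ≤ f i)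
    (hcard : A.card ≤ B.card) (hle : ∀ a ∈ A, ∀ b ∈ B, f a ≤ f b) :
    ∑ i ∈ A, f i ≤ ∑ i ∈ B, f i := by
  rcases B.eq_empty_or_nonempty with hB | hB
  · have hA : A = ∅ := Finset.card_eq_zero.mp
      (Nat.le_antisymm (by simpa [hB] using hcard) (Nat.zero_le _))
    simp [hA, hB]
  · obtain ⟨b0, hb0, hmin⟩ := B.exists_min_image f hB
    calc ∑ i ∈ A, f i ≤ ∑ _i ∈ A, f b0 :=
          Finset.sum_le_sum (fun a ha => hle a ha b0 hb0)
      _ = (A.card : ℝ) * f b0 := by rw [Finset.sum_const, nsmul_eq_mul]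
      _ ≤ (B.card : ℝ) * f b0 :=
          mul_le_mul_of_nonneg_right (Nat.cast_le.mpr hcard) (hf b0)
      _ ≤ ∑ i ∈ B, f i := by
          have := Finset.card_nsmul_le_sum B f (f b0) (fun b hb => hmin b hb)
          simpa [nsmul_eq_mul] using this

lemma polar (a b : ι → ℝ) :
    (a + b) ⬝ᵥ (a + b) - (a - b) ⬝ᵥ (a - b) = 4 * (a ⬝ᵥ b) := by
  unfold dotProduct
  rw [← Finset.sum_sub_distrib, Finset.mul_sum]
  apply Finset.sum_congr rfl; intro i _; simp only [Pi.add_apply, Pi.sub_apply]; ring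

lemma parallelogram (a b : ι → ℝ) :
    (a + b) ⬝ᵥ (a + b) + (a - b) ⬝ᵥ (a - b) = 2 * (a ⬝ᵥ a) + 2 * (b ⬝ᵥ b) := by
  unfold dotProduct
  rw [← Finset.sum_add_distrib, Finset.mul_sum, Finset.mul_sum, ← Finset.sum_add_distrib]
  apply Finset.sum_congr rfl; intro i _; simp only [Pi.add_apply, Pi.sub_apply]; ring

lemma eucNorm_smul (c : ℝ) (v : ι → ℝ) : eucNorm (c • v) = |c| * eucNorm v := by
  unfold eucNorm
  have : ∑ i, (c • v) i ^ 2 = c ^ 2 * ∑ i, v i ^ 2 := by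
    rw [Finset.mul_sum]; apply Finset.sum_congr rfl; intro i _
    simp only [Pi.smul_apply, smul_eq_mul]; ring
  rw [this, Real.sqrt_mul (sq_nonneg c), Real.sqrt_sq_eq_abs]
end basiclemmas

section matrixlemmas
variable {M N : ℕ}

lemma dot_transpose (A : Matrix (Fin M) (Fin N) ℝ) (w : Fin N → ℝ) (z : Fin M → ℝ) :
    w ⬝ᵥ A.transpose.mulVec z = A.mulVec w ⬝ᵥ z := by
  rw [Matrix.mulVec_transpose, dotProduct_comm (A.mulVec w) z,
    dotProduct_mulVec, dotProduct_comm]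

lemma rip_ip_am (A : Matrix (Fin M) (Fin N) ℝ) {t : ℕ} {δ : ℝ} (h : RIPwith A t δ)
    (U : Finset (Fin N)) (hU : U.card ≤ t)
    (v w : Fin N → ℝ) (hv : ∀ i ∉ U, v i = 0) (hw : ∀ i ∉ U, w i = 0) :
    |A.mulVec v ⬝ᵥ A.mulVec w - v ⬝ᵥ w| ≤ δ / 2 * (eucNorm v ^ 2 + eucNorm w ^ 2) := by
  have h1 := h (v + w) ⟨U, hU, fun i hi => by simp [hv i hi, hw i hi]⟩
  have h2 := h (v - w) ⟨U, hU, fun i hi => by simp [hv i hi, hw i hi]⟩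
  rw [← dot_self_eq, ← dot_self_eq] at h1 h2
  rw [Matrix.mulVec_add] at h1
  rw [Matrix.mulVec_sub] at h2
  have p1 := polar (A.mulVec v) (A.mulVec w)
  have p2 := polar v w
  have q1 := parallelogram v w
  have q2 : δ * ((v + w) ⬝ᵥ (v + w) + (v - w) ⬝ᵥ (v - w))
      = δ * (2 * (v ⬝ᵥ v) + 2 * (w ⬝ᵥ w)) := by rw [q1]
  rw [← dot_self_eq v, ← dot_self_eq w, abs_le]
  constructor <;> nlinarith [h1.1, h1.2, h2.1, h2.2, q2, p1, p2]

lemma rip_ip_prod (A : Matrix (Fin M) (Fin N) ℝ) {t : ℕ} {δ : ℝ} (h : RIPwith A t δ)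
    (U : Finset (Fin N)) (hU : U.card ≤ t)
    (v w : Fin N → ℝ) (hv : ∀ i ∉ U, v i = 0) (hw : ∀ i ∉ U, w i = 0) :
    |A.mulVec v ⬝ᵥ A.mulVec w - v ⬝ᵥ w| ≤ δ * eucNorm v * eucNorm w := by
  rcases eq_or_lt_of_le (eucNorm_nonneg' v) with ha | ha
  · have : v = 0 := eucNorm_eq_zero' ha.symm
    subst this
    simp [Matrix.mulVec_zero, ← ha]
  rcases eq_or_lt_of_le (eucNorm_nonneg' w) with hb | hb
  · have : w = 0 := eucNorm_eq_zero' hb.symm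
    subst this
    simp [Matrix.mulVec_zero, ← hb]
  set a := eucNorm v with hav
  set b := eucNorm w with hbw
  have key := rip_ip_am A h U hU (b • v) (a • w)
    (fun i hi => by simp [hv i hi]) (fun i hi => by simp [hw i hi])
  rw [Matrix.mulVec_smul, Matrix.mulVec_smul, eucNorm_smul, eucNorm_smul,
    abs_of_nonneg (le_of_lt hb), abs_of_nonneg (le_of_lt ha)] at key
  have ed : (b • A.mulVec v) ⬝ᵥ (a • A.mulVec w) - (b • v) ⬝ᵥ (a • w)
      = b * a * (A.mulVec v ⬝ᵥ A.mulVec w - v ⬝ᵥ w) := by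
    rw [smul_dotProduct, dotProduct_smul,
        smul_dotProduct, dotProduct_smul]
    simp only [smul_eq_mul]; ring
  rw [ed, abs_mul, abs_of_nonneg (by positivity : (0:ℝ) ≤ b * a)] at key
  have h3 : b * a * |A.mulVec v ⬝ᵥ A.mulVec w - v ⬝ᵥ w| ≤ b * a * (δ * a * b) := by
    calc b * a * |A.mulVec v ⬝ᵥ A.mulVec w - v ⬝ᵥ w| ≤
        δ / 2 * ((b * a) ^ 2 + (a * b) ^ 2) := key
      _ = b * a * (δ * a * b) := by ring
  exact le_of_mul_le_mul_left h3 (by positivity)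

lemma key1 (A : Matrix (Fin M) (Fin N) ℝ) {t : ℕ} {δ : ℝ} (h : RIPwith A t δ)
    (U Δ : Finset (Fin N)) (hU : U.card ≤ t) (hΔ : Δ ⊆ U)
    (v : Fin N → ℝ) (hv : ∀ i ∉ U, v i = 0) :
    eucNorm (restrict (v - A.transpose.mulVec (A.mulVec v)) Δ) ≤ δ * eucNorm v := by
  set g := v - A.transpose.mulVec (A.mulVec v) with hg
  set w := restrict g Δ with hwdef
  have hwU : ∀ i ∉ U, w i = 0 := fun i hi => by
    rw [hwdef]; exact if_neg (fun hmem => hi (hΔ hmem))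
  have hsq : eucNorm w ^ 2 = w ⬝ᵥ g := (restrict_dot_self g Δ).symm
  have hdot : w ⬝ᵥ g = -(A.mulVec w ⬝ᵥ A.mulVec v - w ⬝ᵥ v) := by
    rw [hg, dotProduct_sub, dot_transpose]; ring
  have hb : eucNorm w ^ 2 ≤ δ * eucNorm w * eucNorm v := by
    rw [hsq, hdot]
    calc -(A.mulVec w ⬝ᵥ A.mulVec v - w ⬝ᵥ v)
        ≤ |A.mulVec w ⬝ᵥ A.mulVec v - w ⬝ᵥ v| := neg_le_abs _
      _ ≤ δ * eucNorm w * eucNorm v := rip_ip_prod A h U hU w v hwU hv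
  rcases eq_or_lt_of_le (eucNorm_nonneg' w) with hw0 | hw0
  · rw [← hw0]
    rcases eq_or_lt_of_le (eucNorm_nonneg' v) with hv0 | hv0
    · rw [← hv0]; ring_nf; exact le_refl 0
    · have hvsparse : sparse t v := ⟨U, hU, hv⟩
      have := h v hvsparse
      have hδ0 : 0 ≤ δ := by nlinarith [this.1, this.2, mul_pos hv0 hv0]
      positivity
  · nlinarith [hb, hw0]

lemma key2 (A : Matrix (Fin M) (Fin N) ℝ) {t : ℕ} {δ : ℝ} (h : RIPwith A t δ)
    (Δ : Finset (Fin N)) (hΔ : Δ.card ≤ t) (e : Fin M → ℝ) :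
    eucNorm (restrict (A.transpose.mulVec e) Δ) ≤ Real.sqrt (1 + δ) * eucNorm e := by
  set w := restrict (A.transpose.mulVec e) Δ with hwdef
  have hsq : eucNorm w ^ 2 = w ⬝ᵥ (A.transpose.mulVec e) :=
    (restrict_dot_self (A.transpose.mulVec e) Δ).symm
  have hAw : eucNorm (A.mulVec w) ≤ Real.sqrt (1 + δ) * eucNorm w := by
    have hsw : sparse t w := ⟨Δ, hΔ, fun i hi => by rw [hwdef]; exact if_neg hi⟩
    have h2 := (h w hsw).2
    calc eucNorm (A.mulVec w) = Real.sqrt (eucNorm (A.mulVec w) ^ 2) :=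
          (Real.sqrt_sq (eucNorm_nonneg' _)).symm
      _ ≤ Real.sqrt ((1 + δ) * eucNorm w ^ 2) := Real.sqrt_le_sqrt h2
      _ = Real.sqrt (1 + δ) * eucNorm w := by
          rw [Real.sqrt_mul' _ (sq_nonneg _), Real.sqrt_sq (eucNorm_nonneg' _), mul_comm]
  have hb : eucNorm w ^ 2 ≤ Real.sqrt (1 + δ) * eucNorm w * eucNorm e := by
    rw [hsq, dot_transpose]
    calc A.mulVec w ⬝ᵥ e ≤ eucNorm (A.mulVec w) * eucNorm e := dot_le_eucNorm _ _
      _ ≤ Real.sqrt (1 + δ) * eucNorm w * eucNorm e :=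
          mul_le_mul_of_nonneg_right hAw (eucNorm_nonneg' _)
  rcases eq_or_lt_of_le (eucNorm_nonneg' w) with hw0 | hw0
  · rw [← hw0]
    exact mul_nonneg (Real.sqrt_nonneg _) (eucNorm_nonneg' _)
  · nlinarith [hb, hw0]
end matrixlemmas

/-- Hard-thresholding step bound (Foucart's HTP analysis): if `x, x̂` are `s`-sparse,
`y = A x + e`, and `T̃` is the set of the `s` largest-magnitude entries of
`x̂ + Aᵀ(y − A x̂)`, then for any `x̃` supported on `T̃`,
`‖(x − x̃)_{T̃ᶜ}‖ ≤ √2 δ_{3s} ‖x − x̂‖ + √(2(1+δ_{2s})) ‖e‖`. -/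
theorem hard_thresholding_step_bound {M N : ℕ} (s : ℕ)
    (A : Matrix (Fin M) (Fin N) ℝ)
    (x xhat xtilde : Fin N → ℝ) (e y : Fin M → ℝ)
    (hy : y = A.mulVec x + e)
    (hx : sparse s x) (hxhat : sparse s xhat)
    (δ₃ δ₂ : ℝ) (hδ₃ : RIPwith A (3 * s) δ₃) (hδ₂ : RIPwith A (2 * s) δ₂)
    (T : Finset (Fin N)) (hTcard : T.card = s)
    (hTsel : ∀ i ∈ T, ∀ j ∉ T,
      |(xhat + A.transpose.mulVec (y - A.mulVec xhat)) j| ≤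
      |(xhat + A.transpose.mulVec (y - A.mulVec xhat)) i|)
    (hxt : ∀ i ∉ T, xtilde i = 0) :
    eucNorm (restrict (x - xtilde) Tᶜ) ≤
      Real.sqrt 2 * δ₃ * eucNorm (x - xhat) +
      Real.sqrt (2 * (1 + δ₂)) * eucNorm e := by
  obtain ⟨S, hScard, hS⟩ := hx
  obtain ⟨That, hThatcard, hThat⟩ := hxhat
  set u := xhat + A.transpose.mulVec (y - A.mulVec xhat) with hu
  have hyx : y - A.mulVec xhat = A.mulVec (x - xhat) + e := by
    rw [hy, Matrix.mulVec_sub]; abel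
  set r := x - u with hr
  have hrv : r = ((x - xhat) - A.transpose.mulVec (A.mulVec (x - xhat)))
      + (-(A.transpose.mulVec e)) := by
    rw [hr, hu, hyx, Matrix.mulVec_add]
    funext i
    simp only [Pi.add_apply, Pi.sub_apply, Pi.neg_apply]
    ring
  set Δ := (S \ T) ∪ (T \ S) with hΔdef
  set U := S ∪ T ∪ That with hUdef
  have hUcard : U.card ≤ 3 * s := by
    rw [hUdef]
    have h1 := Finset.card_union_le (S ∪ T) That
    have h2 := Finset.card_union_le S T
    omega
  have hΔU : Δ ⊆ U := by
    intro i hi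
    rw [hΔdef, Finset.mem_union] at hi
    rw [hUdef, Finset.mem_union, Finset.mem_union]
    rcases hi with hi | hi
    · exact Or.inl (Or.inl (Finset.mem_sdiff.mp hi).1)
    · exact Or.inl (Or.inr (Finset.mem_sdiff.mp hi).1)
  have hvU : ∀ i ∉ U, (x - xhat) i = 0 := by
    intro i hi
    rw [hUdef, Finset.mem_union, Finset.mem_union] at hi
    push_neg at hi
    simp [hS i hi.1.1, hThat i hi.2]
  have hΔcard : Δ.card ≤ 2 * s := by
    have hsub : Δ ⊆ S ∪ T := by
      intro i hi; rw [hΔdef, Finset.mem_union] at hi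
      rcases hi with hi | hi
      · exact Finset.mem_union_left _ (Finset.mem_sdiff.mp hi).1
      · exact Finset.mem_union_right _ (Finset.mem_sdiff.mp hi).1
    have h1 := Finset.card_le_card hsub
    have h2 := Finset.card_union_le S T
    omega
  have stepA : restrict (x - xtilde) Tᶜ = restrict x (S \ T) := by
    funext i
    by_cases hiT : i ∈ T
    · have h1 : i ∉ Tᶜ := by simp [hiT]
      have h2 : i ∉ S \ T := by simp [hiT]
      simp [_root_.restrict, h1, h2]
    · have h1 : i ∈ Tᶜ := Finset.mem_compl.mpr hiT
      by_cases hiS : i ∈ S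
      · have h2 : i ∈ S \ T := Finset.mem_sdiff.mpr ⟨hiS, hiT⟩
        simp [_root_.restrict, h1, h2, hxt i hiT]
      · have h2 : i ∉ S \ T := by simp [hiS]
        simp [_root_.restrict, h1, h2, hxt i hiT, hS i hiS]
  have hxru : x = r + u := by rw [hr]; funext i; simp
  have stepB : eucNorm (restrict x (S \ T)) ≤
      eucNorm (restrict r (S \ T)) + eucNorm (restrict u (S \ T)) := by
    calc eucNorm (restrict x (S \ T))
        = eucNorm (restrict r (S \ T) + restrict u (S \ T)) := by
          rw [← restrict_add, ← hxru]
      _ ≤ _ := eucNorm_triangle _ _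
  have hcardST : (S \ T).card ≤ (T \ S).card := by
    have h1 := Finset.card_sdiff_add_card_inter S T
    have h2 := Finset.card_sdiff_add_card_inter T S
    rw [Finset.inter_comm] at h2
    omega
  have stepC : eucNorm (restrict u (S \ T)) ≤ eucNorm (restrict r (T \ S)) := by
    rw [eucNorm_restrict_eq, eucNorm_restrict_eq]
    apply Real.sqrt_le_sqrt
    calc ∑ i ∈ S \ T, u i ^ 2 ≤ ∑ i ∈ T \ S, u i ^ 2 := by
          apply sum_le_sum_of_card_le _ (fun i => sq_nonneg _) hcardST
          intro a ha b hb
          have haT : a ∉ T := (Finset.mem_sdiff.mp ha).2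
          have hbT : b ∈ T := (Finset.mem_sdiff.mp hb).1
          have hab := hTsel b hbT a haT
          calc u a ^ 2 = |u a| ^ 2 := (sq_abs _).symm
            _ ≤ |u b| ^ 2 := pow_le_pow_left₀ (abs_nonneg _) hab 2
            _ = u b ^ 2 := sq_abs _
      _ = ∑ i ∈ T \ S, r i ^ 2 := by
          apply Finset.sum_congr rfl
          intro i hi
          have hiS : i ∉ S := (Finset.mem_sdiff.mp hi).2
          have hui : u i = - r i := by
            rw [hr]; simp [hS i hiS]
          rw [hui]; ring
  have hdisj : Disjoint (S \ T) (T \ S) := disjoint_sdiff_sdiff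
  have stepD : eucNorm (restrict r (S \ T)) + eucNorm (restrict r (T \ S)) ≤
      Real.sqrt 2 * eucNorm (restrict r Δ) := by
    set a := eucNorm (restrict r (S \ T)) with hadef
    set b := eucNorm (restrict r (T \ S)) with hbdef
    have ha : 0 ≤ a := eucNorm_nonneg' _
    have hb : 0 ≤ b := eucNorm_nonneg' _
    have hab : a ^ 2 + b ^ 2 = eucNorm (restrict r Δ) ^ 2 := by
      rw [hadef, hbdef, eucNorm_restrict_sq, eucNorm_restrict_sq, eucNorm_restrict_sq, hΔdef,
        Finset.sum_union hdisj]
    have h1 : a + b ≤ Real.sqrt (2 * (a ^ 2 + b ^ 2)) := by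
      calc a + b = Real.sqrt ((a + b) ^ 2) := (Real.sqrt_sq (by linarith)).symm
        _ ≤ Real.sqrt (2 * (a ^ 2 + b ^ 2)) :=
            Real.sqrt_le_sqrt (by nlinarith [sq_nonneg (a - b)])
    rw [hab, Real.sqrt_mul (by norm_num : (0:ℝ) ≤ 2),
      Real.sqrt_sq (eucNorm_nonneg' _)] at h1
    exact h1
  have stepE : eucNorm (restrict r Δ) ≤
      δ₃ * eucNorm (x - xhat) + Real.sqrt (1 + δ₂) * eucNorm e := by
    rw [hrv, restrict_add]
    refine le_trans (eucNorm_triangle _ _) (add_le_add ?_ ?_)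
    · exact key1 A hδ₃ U Δ hUcard hΔU _ hvU
    · rw [restrict_neg, eucNorm_neg']
      exact key2 A hδ₂ Δ hΔcard e
  calc eucNorm (restrict (x - xtilde) Tᶜ) = eucNorm (restrict x (S \ T)) := by rw [stepA]
    _ ≤ eucNorm (restrict r (S \ T)) + eucNorm (restrict u (S \ T)) := stepB
    _ ≤ eucNorm (restrict r (S \ T)) + eucNorm (restrict r (T \ S)) := by linarith [stepC]
    _ ≤ Real.sqrt 2 * eucNorm (restrict r Δ) := stepD
    _ ≤ Real.sqrt 2 * (δ₃ * eucNorm (x - xhat) + Real.sqrt (1 + δ₂) * eucNorm e) :=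
        mul_le_mul_of_nonneg_left stepE (Real.sqrt_nonneg 2)
    _ = Real.sqrt 2 * δ₃ * eucNorm (x - xhat) + Real.sqrt (2 * (1 + δ₂)) * eucNorm e := by
        rw [Real.sqrt_mul (by norm_num : (0:ℝ) ≤ 2)]
        ring
end
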